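/- Let τ ∈ (0,1], α > 0 and λ : [−α,α] → ℂ such that there is C₀ > 0 with |λ(u) − 1 + u²/2| ≤ C₀ |u|^{2+τ} for all |u| ≤ α, and such that |λ(u)| ≤ e^{−u²/4} for all |u| ≤ α. Then there exists C > 0 such that for every integer n ≥ 1 and every real t with |t| ≤ α√n one has |λ(t/√n)^n − e^{−t²/2}| ≤ C n^{−τ/2} |t|^{2+τ} e^{−t²/4}. -/

import Mathlib

lemma aux_pow_sub_pow (M : ℝ) (hM : 0 ≤ M) :
    ∀ (n : ℕ) (a b : ℂ), ‖a‖ ≤ M → ‖b‖ ≤ M →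
      ‖a ^ n - b ^ n‖ ≤ n * ‖a - b‖ * M ^ (n - 1) := by
  intro n
  induction n with
  | zero => intro a b _ _; simp
  | succ m ih =>
    intro a b ha hb
    have key : a ^ (m + 1) - b ^ (m + 1) = a * (a ^ m - b ^ m) + (a - b) * b ^ m := by
      ring
    have hb' : ‖b ^ m‖ ≤ M ^ m := by
      rw [norm_pow]; exact pow_le_pow_left₀ (norm_nonneg b) hb m
    calc ‖a ^ (m + 1) - b ^ (m + 1)‖
        ≤ ‖a * (a ^ m - b ^ m)‖ + ‖(a - b) * b ^ m‖ := by
          rw [key]; exact norm_add_le _ _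
      _ = ‖a‖ * ‖a ^ m - b ^ m‖
            + ‖a - b‖ * ‖b ^ m‖ := by rw [norm_mul, norm_mul]
      _ ≤ M * (m * ‖a - b‖ * M ^ (m - 1))
            + ‖a - b‖ * M ^ m :=
          add_le_add (mul_le_mul ha (ih a b ha hb) (norm_nonneg _) hM)
            (mul_le_mul_of_nonneg_left hb' (norm_nonneg _))
      _ ≤ (m + 1 : ℕ) * ‖a - b‖ * M ^ ((m + 1) - 1) := by
          rcases Nat.eq_zero_or_pos m with h0 | hpos
          · subst h0; simp
          · have hMM : M * M ^ (m - 1) = M ^ m := by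
              rw [← pow_succ']; congr 1; omega
            have e : M * (↑m * ‖a - b‖ * M ^ (m - 1))
                = ↑m * ‖a - b‖ * M ^ m := by rw [← hMM]; ring
            rw [e]
            push_cast
            have : (↑m + 1 : ℝ) * ‖a - b‖ * M ^ m
                = ↑m * ‖a - b‖ * M ^ m + ‖a - b‖ * M ^ m := by ring
            exact le_of_eq this.symm

lemma aux_exp_bound (x : ℝ) (hx : 0 ≤ x) : |Real.exp (-x) - 1 + x| ≤ x ^ 2 := by
  have h1 := Real.add_one_le_exp (-x)
  have h2 : Real.exp (-x) ≤ 1 - x + x ^ 2 := by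
    have hp := Real.exp_pos x
    have h3 := Real.add_one_le_exp x
    have h4 : Real.exp (-x) * Real.exp x = 1 := by
      rw [← Real.exp_add]; simp
    nlinarith [Real.exp_pos (-x)]
  rw [abs_le]; constructor <;> nlinarith

/-- The pointwise estimate of Section 4.3 of the paper:
`|λ(t/√n)^n − e^{−t²/2}| ≤ C n^{−τ/2} |t|^{2+τ} e^{−t²/4}` for `|t| ≤ α√n`. -/
theorem stmt_6
    (τ : ℝ) (hτ : 0 < τ) (hτ1 : τ ≤ 1)
    (α : ℝ) (hα : 0 < α)
    (lam : ℝ → ℂ)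
    (C₀ : ℝ) (hC₀ : 0 < C₀)
    (hTaylor : ∀ u : ℝ, |u| ≤ α →
      ‖lam u - 1 + u ^ 2 / 2‖ ≤ C₀ * |u| ^ (2 + τ))
    (hmod : ∀ u : ℝ, |u| ≤ α → ‖lam u‖ ≤ Real.exp (-u ^ 2 / 4)) :
    ∃ C > (0 : ℝ), ∀ n : ℕ, 1 ≤ n → ∀ t : ℝ, |t| ≤ α * Real.sqrt n →
      ‖lam (t / Real.sqrt n) ^ n - Real.exp (-t ^ 2 / 2)‖
        ≤ C * (n : ℝ) ^ (-(τ / 2)) * |t| ^ (2 + τ) * Real.exp (-t ^ 2 / 4) := by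
  set C₁ : ℝ := C₀ + (1 + α) ^ 2 / 4 with hC₁def
  have hC₁ : 0 < C₁ := by positivity
  refine ⟨C₁ * Real.exp (α ^ 2 / 4), by positivity, ?_⟩
  intro n hn t ht
  have hn0 : (0 : ℝ) < n := by exact_mod_cast hn
  set s : ℝ := Real.sqrt n with hsdef
  have hs : 0 < s := Real.sqrt_pos.mpr hn0
  have hs2 : s ^ 2 = n := Real.sq_sqrt hn0.le
  set u : ℝ := t / s with hudef
  have hu : |u| ≤ α := by
    rw [hudef, abs_div, abs_of_pos hs]
    exact (div_le_iff₀ hs).mpr ht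
  have hnu : (n : ℝ) * u ^ 2 = t ^ 2 := by
    rw [hudef, div_pow, ← hs2]
    field_simp
  -- Step A : |lam u - exp(-u²/2)| ≤ C₁ |u|^(2+τ)
  have hA : ‖lam u - (Real.exp (-u ^ 2 / 2) : ℂ)‖ ≤ C₁ * |u| ^ (2 + τ) := by
    have h1 := hTaylor u hu
    have h2 : ‖(Real.exp (-u ^ 2 / 2) : ℂ) - 1 + (u : ℂ) ^ 2 / 2‖
        ≤ u ^ 2 * u ^ 2 / 4 := by
      have hb := aux_exp_bound (u ^ 2 / 2) (by positivity)
      have heq : ((Real.exp (-u ^ 2 / 2) : ℂ) - 1 + (u : ℂ) ^ 2 / 2)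
          = ((Real.exp (-(u ^ 2 / 2)) - 1 + u ^ 2 / 2 : ℝ) : ℂ) := by
        push_cast
        rw [neg_div]
      rw [heq, Complex.norm_real, Real.norm_eq_abs]
      calc |Real.exp (-(u ^ 2 / 2)) - 1 + u ^ 2 / 2| ≤ (u ^ 2 / 2) ^ 2 := hb
        _ = u ^ 2 * u ^ 2 / 4 := by ring
    have htri : ‖lam u - (Real.exp (-u ^ 2 / 2) : ℂ)‖
        ≤ C₀ * |u| ^ (2 + τ) + u ^ 2 * u ^ 2 / 4 := by
      have heq2 : lam u - (Real.exp (-u ^ 2 / 2) : ℂ)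
          = (lam u - 1 + (u : ℂ) ^ 2 / 2)
            - ((Real.exp (-u ^ 2 / 2) : ℂ) - 1 + (u : ℂ) ^ 2 / 2) := by ring
      rw [heq2]
      calc ‖(lam u - 1 + (u : ℂ) ^ 2 / 2)
            - ((Real.exp (-u ^ 2 / 2) : ℂ) - 1 + (u : ℂ) ^ 2 / 2)‖
          ≤ ‖lam u - 1 + (u : ℂ) ^ 2 / 2‖
            + ‖(Real.exp (-u ^ 2 / 2) : ℂ) - 1 + (u : ℂ) ^ 2 / 2‖ := norm_sub_le _ _
        _ ≤ C₀ * |u| ^ (2 + τ) + u ^ 2 * u ^ 2 / 4 := by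
            exact add_le_add h1 h2
    have hsq : u ^ 2 * u ^ 2 ≤ |u| ^ (2 + τ) * (1 + α) ^ 2 := by
      have e1 : u ^ 2 * u ^ 2 = |u| ^ (2 + τ) * |u| ^ ((2 : ℝ) - τ) := by
        rw [← Real.rpow_add_of_nonneg (abs_nonneg u) (by linarith) (by linarith)]
        have : (2 + τ) + ((2 : ℝ) - τ) = ((4 : ℕ) : ℝ) := by norm_num
        rw [this, Real.rpow_natCast]
        rw [← abs_pow]
        rw [abs_of_nonneg (by positivity)]
        ring
      have e2 : |u| ^ ((2 : ℝ) - τ) ≤ (1 + α) ^ 2 := by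
        calc |u| ^ ((2 : ℝ) - τ) ≤ (1 + α) ^ ((2 : ℝ) - τ) :=
              Real.rpow_le_rpow (abs_nonneg u) (by linarith) (by linarith)
          _ ≤ (1 + α) ^ ((2 : ℕ) : ℝ) :=
              Real.rpow_le_rpow_of_exponent_le (by linarith) (by push_cast; linarith)
          _ = (1 + α) ^ 2 := Real.rpow_natCast _ 2
      calc u ^ 2 * u ^ 2 = |u| ^ (2 + τ) * |u| ^ ((2 : ℝ) - τ) := e1
        _ ≤ |u| ^ (2 + τ) * (1 + α) ^ 2 :=
            mul_le_mul_of_nonneg_left e2 (Real.rpow_nonneg (abs_nonneg u) _)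
    calc ‖lam u - (Real.exp (-u ^ 2 / 2) : ℂ)‖
        ≤ C₀ * |u| ^ (2 + τ) + u ^ 2 * u ^ 2 / 4 := htri
      _ ≤ C₀ * |u| ^ (2 + τ) + |u| ^ (2 + τ) * (1 + α) ^ 2 / 4 := by linarith
      _ = C₁ * |u| ^ (2 + τ) := by rw [hC₁def]; ring
  -- Bounds on moduli
  set M : ℝ := Real.exp (-u ^ 2 / 4) with hMdef
  have hM0 : 0 ≤ M := Real.exp_nonneg _
  have hla : ‖lam u‖ ≤ M := hmod u hu
  have hlb : ‖(Real.exp (-u ^ 2 / 2) : ℂ)‖ ≤ M := by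
    rw [Complex.norm_real, Real.norm_eq_abs, abs_of_pos (Real.exp_pos _)]
    exact Real.exp_le_exp.mpr (by nlinarith [sq_nonneg u])
  -- rewrite exp(-t²/2) as a power
  have hexp : ((Real.exp (-u ^ 2 / 2) : ℂ)) ^ n = (Real.exp (-t ^ 2 / 2) : ℂ) := by
    rw [← Complex.ofReal_pow, ← Real.exp_nat_mul]
    congr 1
    field_simp
    rw [hnu]
  -- the key rpow identity
  have key1 : (n : ℝ) * |u| ^ (2 + τ) = (n : ℝ) ^ (-(τ / 2)) * |t| ^ (2 + τ) := by
    have e1 : |u| = |t| / s := by rw [hudef, abs_div, abs_of_pos hs]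
    have e2 : |u| ^ (2 + τ) = |t| ^ (2 + τ) / s ^ (2 + τ) := by
      rw [e1, Real.div_rpow (abs_nonneg t) hs.le]
    have e3 : s ^ (2 + τ) = (n : ℝ) * s ^ τ := by
      rw [Real.rpow_add hs, Real.rpow_two, hs2]
    have e4 : (n : ℝ) ^ (-(τ / 2)) = s ^ (-τ) := by
      rw [hsdef, Real.sqrt_eq_rpow, ← Real.rpow_mul (Nat.cast_nonneg n)]
      congr 1; ring
    have hsτ : (0 : ℝ) < s ^ τ := Real.rpow_pos_of_pos hs τ
    rw [e2, e3, e4, Real.rpow_neg hs.le]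
    field_simp
  -- bound on M^(n-1)
  have key2 : M ^ (n - 1) ≤ Real.exp (α ^ 2 / 4) * Real.exp (-t ^ 2 / 4) := by
    have e5 : M ^ (n - 1) = Real.exp (((n - 1 : ℕ) : ℝ) * (-u ^ 2 / 4)) := by
      rw [hMdef, ← Real.exp_nat_mul]
    have e6 : ((n - 1 : ℕ) : ℝ) = (n : ℝ) - 1 := by
      have := Nat.cast_sub hn (R := ℝ); simpa using this
    have hu2 : u ^ 2 ≤ α ^ 2 := by
      calc u ^ 2 = |u| ^ 2 := (sq_abs u).symm
        _ ≤ α ^ 2 := pow_le_pow_left₀ (abs_nonneg u) hu 2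
    rw [e5, e6]
    have e7 : ((n : ℝ) - 1) * (-u ^ 2 / 4) = u ^ 2 / 4 + (-t ^ 2 / 4) := by
      have : (n : ℝ) * u ^ 2 = t ^ 2 := hnu
      field_simp
      linarith
    rw [e7, Real.exp_add]
    exact mul_le_mul_of_nonneg_right
      (Real.exp_le_exp.mpr (by linarith)) (Real.exp_nonneg _)
  -- main computation
  calc ‖lam u ^ n - (Real.exp (-t ^ 2 / 2) : ℂ)‖
      = ‖lam u ^ n - ((Real.exp (-u ^ 2 / 2) : ℂ)) ^ n‖ := by rw [hexp]
    _ ≤ n * ‖lam u - (Real.exp (-u ^ 2 / 2) : ℂ)‖ * M ^ (n - 1) :=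
        aux_pow_sub_pow M hM0 n _ _ hla hlb
    _ ≤ n * (C₁ * |u| ^ (2 + τ)) * M ^ (n - 1) := by
        have := mul_le_mul_of_nonneg_left hA (by positivity : (0:ℝ) ≤ (n:ℝ))
        exact mul_le_mul_of_nonneg_right this (pow_nonneg hM0 _)
    _ = C₁ * ((n : ℝ) * |u| ^ (2 + τ)) * M ^ (n - 1) := by ring
    _ = C₁ * ((n : ℝ) ^ (-(τ / 2)) * |t| ^ (2 + τ)) * M ^ (n - 1) := by rw [key1]
    _ ≤ C₁ * ((n : ℝ) ^ (-(τ / 2)) * |t| ^ (2 + τ))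
          * (Real.exp (α ^ 2 / 4) * Real.exp (-t ^ 2 / 4)) := by
        refine mul_le_mul_of_nonneg_left key2 ?_
        have h1 : (0 : ℝ) ≤ (n : ℝ) ^ (-(τ / 2)) := Real.rpow_nonneg (Nat.cast_nonneg n) _
        have h2 : (0 : ℝ) ≤ |t| ^ (2 + τ) := Real.rpow_nonneg (abs_nonneg t) _
        positivity
    _ = C₁ * Real.exp (α ^ 2 / 4) * (n : ℝ) ^ (-(τ / 2)) * |t| ^ (2 + τ)
          * Real.exp (-t ^ 2 / 4) := by ring
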